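/- The pre-limit drift is close to the limiting drift with an explicit bound: suppose y : Fin m × {0,…,K} → ℝ satisfies y(i,n) ≥ 0 for all (i,n) and Σ_{i,n} y(i,n) = 1, and Λ/C ≤ r(i) ≤ 1 for all i. Then for all real parameters a and g, the Euclidean norm of β_{a,g}(y) − β_{Λ,γ}(y) satisfies ‖β_{a,g}(y) − β_{Λ,γ}(y)‖ ≤ 2(K+1)·( |a − Λ|·C/Λ + |g − γ| ). -/

import Mathlib

open scoped BigOperators

/-- Extension of a weight `y : Fin m × {0,…,K} → ℝ` in its second coordinate to all
natural-number indices, by zero. -/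
noncomputable def extWeight {K m : ℕ} (y : Fin m × Fin (K + 1) → ℝ) (i : Fin m) (n : ℕ) : ℝ :=
  if h : n < K + 1 then y (i, ⟨n, h⟩) else 0

/-- The pre-limit drift `β_{a,g}(y) ∈ ℝ^{K+1}`:
`β_{a,g}(y)(k) = Σᵢ (a/r(i))·(y(i,k+1)·[k<K] − y(i,k)·[k>0])
               + (g − Σ_{i,n} n·y(i,n))·Σᵢ (y(i,k−1)·[k>0] − y(i,k)·[k<K])`. -/
noncomputable def preDrift (K m : ℕ) (r : Fin m → ℝ) (a g : ℝ)
    (y : Fin m × Fin (K + 1) → ℝ) : EuclideanSpace ℝ (Fin (K + 1)) :=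
  WithLp.toLp 2 fun k =>
    (∑ i : Fin m, (a / r i) *
        (extWeight y i ((k : ℕ) + 1) * (if (k : ℕ) < K then 1 else 0)
          - y (i, k) * (if 0 < (k : ℕ) then 1 else 0)))
    + (g - ∑ i : Fin m, ∑ n : Fin (K + 1), (n : ℝ) * y (i, n))
      * (∑ i : Fin m,
          (extWeight y i ((k : ℕ) - 1) * (if 0 < (k : ℕ) then 1 else 0)
            - y (i, k) * (if (k : ℕ) < K then 1 else 0)))

/-- The pre-limit drift is close to the limiting drift, with the explicit bound
`‖β_{a,g}(y) − β_{Λ,γ}(y)‖ ≤ 2(K+1)·(|a − Λ|·C/Λ + |g − γ|)`. -/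
theorem preDrift_close_to_limit (K : ℕ) (hK : 1 ≤ K) (m : ℕ) (hm : 1 ≤ m)
    (Λ' C γ : ℝ) (hΛ : 0 < Λ') (hC : Λ' ≤ C)
    (hγ : 0 ≤ γ)
    (r : Fin m → ℝ) (hr : ∀ i, Λ' / C ≤ r i ∧ r i ≤ 1)
    (y : Fin m × Fin (K + 1) → ℝ)
    (hy : ∀ p, 0 ≤ y p) (hsum : ∑ p : Fin m × Fin (K + 1), y p = 1)
    (a g : ℝ) :
    ‖preDrift K m r a g y - preDrift K m r Λ' γ y‖ ≤
      2 * (K + 1) * (|a - Λ'| * C / Λ' + |g - γ|) := by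

  have hCpos : 0 < C := lt_of_lt_of_le hΛ hC
  have hrpos : ∀ i, 0 < r i := fun i => lt_of_lt_of_le (div_pos hΛ hCpos) (hr i).1
  have hinv : ∀ i, (r i)⁻¹ ≤ C / Λ' := by
    intro i
    rw [inv_le_comm₀ (hrpos i) (div_pos hCpos hΛ), inv_div]
    exact (hr i).1
  set B := |a - Λ'| * C / Λ' + |g - γ| with hBdef
  have hB1 : 0 ≤ |a - Λ'| * C / Λ' := by positivity
  have hBnn : 0 ≤ B := by positivity
  -- column sums are at most 1
  have hcol : ∀ n : Fin (K+1), (∑ i, y (i, n)) ≤ 1 := by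
    intro n
    rw [← hsum, Fintype.sum_prod_type]
    refine Finset.sum_le_sum fun i _ => ?_
    exact Finset.single_le_sum (fun j _ => hy (i, j)) (Finset.mem_univ n)
  have hcoln : ∀ n : Fin (K+1), 0 ≤ (∑ i, y (i, n)) :=
    fun n => Finset.sum_nonneg fun i _ => hy (i, n)
  have hextnn : ∀ i n, 0 ≤ extWeight y i n := by
    intro i n; unfold extWeight; split
    · exact hy _
    · exact le_refl 0
  have hext : ∀ n : ℕ, (∑ i, extWeight y i n) ≤ 1 := by
    intro n
    by_cases h : n < K + 1
    · simpa [extWeight, h] using hcol ⟨n, h⟩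
    · simp [extWeight, h]
  have hextnn' : ∀ n : ℕ, 0 ≤ (∑ i, extWeight y i n) :=
    fun n => Finset.sum_nonneg fun i _ => hextnn i n
  -- generic: |x*b - z*c| ≤ x + z for b,c ∈ {0,1}
  have key : ∀ (x z b c : ℝ), 0 ≤ x → 0 ≤ z → (b = 0 ∨ b = 1) → (c = 0 ∨ c = 1) →
      |x * b - z * c| ≤ x + z := by
    intro x z b c hx hz hb hc
    rcases hb with hb|hb <;> rcases hc with hc|hc <;> subst hb <;> subst hc <;>
      rw [abs_le] <;> constructor <;> nlinarith
  have ifcase : ∀ (P : Prop) [Decidable P], ((if P then (1:ℝ) else 0) = 0 ∨ (if P then (1:ℝ) else 0) = 1) := by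
    intro P _; split <;> simp
  -- componentwise bound
  have hcomp : ∀ k : Fin (K+1),
      |(preDrift K m r a g y - preDrift K m r Λ' γ y) k| ≤ 2 * B := by
    intro k
    have hdiff : (preDrift K m r a g y - preDrift K m r Λ' γ y) k =
        (∑ i : Fin m, ((a - Λ') / r i) *
          (extWeight y i ((k : ℕ) + 1) * (if (k : ℕ) < K then 1 else 0)
            - y (i, k) * (if 0 < (k : ℕ) then 1 else 0)))
        + (g - γ) * (∑ i : Fin m,
          (extWeight y i ((k : ℕ) - 1) * (if 0 < (k : ℕ) then 1 else 0)
            - y (i, k) * (if (k : ℕ) < K then 1 else 0))) := by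
      show preDrift K m r a g y k - preDrift K m r Λ' γ y k = _
      unfold preDrift
      have e1 : (∑ i : Fin m, (a / r i) *
            (extWeight y i ((k : ℕ) + 1) * (if (k : ℕ) < K then 1 else 0)
              - y (i, k) * (if 0 < (k : ℕ) then 1 else 0)))
          - (∑ i : Fin m, (Λ' / r i) *
            (extWeight y i ((k : ℕ) + 1) * (if (k : ℕ) < K then 1 else 0)
              - y (i, k) * (if 0 < (k : ℕ) then 1 else 0)))
          = ∑ i : Fin m, ((a - Λ') / r i) *
            (extWeight y i ((k : ℕ) + 1) * (if (k : ℕ) < K then 1 else 0)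
              - y (i, k) * (if 0 < (k : ℕ) then 1 else 0)) := by
        rw [← Finset.sum_sub_distrib]
        refine Finset.sum_congr rfl fun i _ => ?_
        rw [← sub_mul, div_sub_div_same]
      linear_combination e1
    rw [hdiff]
    set T1 : Fin m → ℝ := fun i =>
      extWeight y i ((k : ℕ) + 1) * (if (k : ℕ) < K then 1 else 0)
        - y (i, k) * (if 0 < (k : ℕ) then 1 else 0) with hT1
    set T2 : Fin m → ℝ := fun i =>
      extWeight y i ((k : ℕ) - 1) * (if 0 < (k : ℕ) then 1 else 0)
        - y (i, k) * (if (k : ℕ) < K then 1 else 0) with hT2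
    have hT1b : ∀ i, |T1 i| ≤ extWeight y i ((k : ℕ) + 1) + y (i, k) :=
      fun i => key _ _ _ _ (hextnn i _) (hy (i, k)) (ifcase _) (ifcase _)
    have hT2b : ∀ i, |T2 i| ≤ extWeight y i ((k : ℕ) - 1) + y (i, k) :=
      fun i => key _ _ _ _ (hextnn i _) (hy (i, k)) (ifcase _) (ifcase _)
    have bnd1 : |∑ i, ((a - Λ') / r i) * T1 i| ≤ |a - Λ'| * (C / Λ') * 2 := by
      calc |∑ i, ((a - Λ') / r i) * T1 i| ≤ ∑ i, |((a - Λ') / r i) * T1 i| :=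
            Finset.abs_sum_le_sum_abs _ _
        _ ≤ ∑ i, |a - Λ'| * (C / Λ') * (extWeight y i ((k : ℕ) + 1) + y (i, k)) := by
            refine Finset.sum_le_sum fun i _ => ?_
            rw [abs_mul]
            refine mul_le_mul ?_ (hT1b i) (abs_nonneg _) (by positivity)
            rw [abs_div, abs_of_pos (hrpos i), div_eq_mul_inv]
            exact mul_le_mul_of_nonneg_left (hinv i) (abs_nonneg _)
        _ = |a - Λ'| * (C / Λ') *
              ((∑ i, extWeight y i ((k : ℕ) + 1)) + ∑ i, y (i, k)) := by
            rw [← Finset.mul_sum, Finset.sum_add_distrib]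
        _ ≤ |a - Λ'| * (C / Λ') * 2 := by
            refine mul_le_mul_of_nonneg_left ?_ (by positivity)
            have := hext ((k : ℕ) + 1)
            have := hcol k
            linarith
    have bnd2 : |(g - γ) * ∑ i, T2 i| ≤ |g - γ| * 2 := by
      rw [abs_mul]
      refine mul_le_mul_of_nonneg_left ?_ (abs_nonneg _)
      calc |∑ i, T2 i| ≤ ∑ i, |T2 i| := Finset.abs_sum_le_sum_abs _ _
        _ ≤ (∑ i, extWeight y i ((k : ℕ) - 1)) + ∑ i, y (i, k) := by
            rw [← Finset.sum_add_distrib]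
            exact Finset.sum_le_sum fun i _ => hT2b i
        _ ≤ 2 := by
            have := hext ((k : ℕ) - 1)
            have := hcol k
            linarith
    calc |(∑ i, ((a - Λ') / r i) * T1 i) + (g - γ) * ∑ i, T2 i|
        ≤ |∑ i, ((a - Λ') / r i) * T1 i| + |(g - γ) * ∑ i, T2 i| := abs_add_le _ _
      _ ≤ |a - Λ'| * (C / Λ') * 2 + |g - γ| * 2 := add_le_add bnd1 bnd2
      _ = 2 * B := by rw [hBdef]; field_simp
  -- from componentwise to Euclidean norm
  have hnorm : ‖preDrift K m r a g y - preDrift K m r Λ' γ y‖ ≤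
      Real.sqrt ((K + 1) * (2 * B) ^ 2) := by
    rw [EuclideanSpace.norm_eq]
    refine Real.sqrt_le_sqrt ?_
    calc (∑ k : Fin (K+1), ‖(preDrift K m r a g y - preDrift K m r Λ' γ y) k‖ ^ 2)
        ≤ ∑ k : Fin (K+1), (2 * B) ^ 2 := by
          refine Finset.sum_le_sum fun k _ => ?_
          have h := hcomp k
          rw [Real.norm_eq_abs]
          nlinarith [abs_nonneg ((preDrift K m r a g y - preDrift K m r Λ' γ y) k)]
      _ = (K + 1) * (2 * B) ^ 2 := by
          rw [Finset.sum_const, Finset.card_univ, Fintype.card_fin]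
          push_cast; ring
  refine hnorm.trans ?_
  have h1 : Real.sqrt ((K + 1) * (2 * B) ^ 2) = Real.sqrt (K + 1) * (2 * B) := by
    rw [Real.sqrt_mul (by positivity), Real.sqrt_sq (by positivity)]
  rw [h1]
  have h2 : Real.sqrt ((K : ℝ) + 1) ≤ (K : ℝ) + 1 := by
    have := Real.sqrt_le_sqrt (show ((K:ℝ)+1) ≤ ((K:ℝ)+1)^2 by nlinarith [Nat.cast_nonneg (α := ℝ) K])
    rwa [Real.sqrt_sq (by positivity)] at this
  calc Real.sqrt ((K:ℝ) + 1) * (2 * B) ≤ ((K:ℝ) + 1) * (2 * B) := by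
        exact mul_le_mul_of_nonneg_right h2 (by positivity)
    _ = 2 * ((K:ℝ) + 1) * B := by ring
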